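/- There exists a constant c > 0 and an infinite family of triangle-free graphs G_n on n vertices (for infinitely many n) with chromatic number χ(G_n) ≥ c·log(log n). -/

import Mathlib

open SimpleGraph

/-- The shift graph vertex set: ordered pairs from `Fin m`. -/
def ShiftV (m : ℕ) : Type := {p : Fin m × Fin m // p.1 < p.2}

instance (m : ℕ) : Fintype (ShiftV m) := by unfold ShiftV; infer_instance
instance (m : ℕ) : DecidableEq (ShiftV m) := by unfold ShiftV; infer_instance

def shiftGraph (m : ℕ) : SimpleGraph (ShiftV m) where
  Adj a b := a.1.2 = b.1.1 ∨ b.1.2 = a.1.1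
  symm := by constructor; rintro a b (h | h) <;> [right; left] <;> exact h
  loopless := by
    constructor
    rintro ⟨⟨x, y⟩, h⟩ (h1 | h1) <;> exact absurd (h1 ▸ h) (lt_irrefl _)

lemma shiftGraph_triangleFree (m : ℕ) : (shiftGraph m).CliqueFree 3 := by
  intro s hs
  rw [is3Clique_iff] at hs
  obtain ⟨a, b, c, hab, hac, hbc, -⟩ := hs
  obtain ⟨⟨a1, a2⟩, ha⟩ := a
  obtain ⟨⟨b1, b2⟩, hb⟩ := b
  obtain ⟨⟨c1, c2⟩, hc⟩ := c
  simp only [shiftGraph, Fin.lt_def] at ha hb hc hab hac hbc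
  rcases hab with h1 | h1 <;> rcases hac with h2 | h2 <;> rcases hbc with h3 | h3 <;>
    simp only [Fin.ext_iff] at h1 h2 h3 <;> omega

/-- Key lower bound: a `t`-coloring of the shift graph gives `m ≤ 2 ^ t`. -/
lemma shiftGraph_colorable_bound {m t : ℕ} (h : (shiftGraph m).Colorable t) : m ≤ 2 ^ t := by
  obtain ⟨C⟩ := h
  classical
  set S : Fin m → Finset (Fin t) :=
    fun i => Finset.image C (Finset.univ.filter (fun v : ShiftV m => v.1.1 = i)) with hS
  have key : ∀ i i' : Fin m, i < i' → S i = S i' → False := by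
    intro i i' hlt hii'
    set v0 : ShiftV m := ⟨(i, i'), hlt⟩ with hv0
    have hmem : C v0 ∈ S i := Finset.mem_image_of_mem C (Finset.mem_filter.mpr ⟨Finset.mem_univ _, rfl⟩)
    rw [hii'] at hmem
    obtain ⟨v, hv, hCv⟩ := Finset.mem_image.mp hmem
    rw [Finset.mem_filter] at hv
    have hadj : (shiftGraph m).Adj v0 v := by
      left
      show (i, i').2 = v.1.1
      exact hv.2.symm
    exact C.valid hadj hCv.symm
  have hinj : Function.Injective S := by
    intro i i' hii'
    by_contra hne
    rcases lt_or_gt_of_ne hne with h | h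
    · exact key i i' h hii'
    · exact key i' i h hii'.symm
  calc m = Fintype.card (Fin m) := (Fintype.card_fin m).symm
    _ ≤ Fintype.card (Finset (Fin t)) := Fintype.card_le_of_injective S hinj
    _ = 2 ^ t := by simp [Fintype.card_finset]

lemma shiftGraph_chromatic_ge (k : ℕ) :
    (k : ℕ∞) ≤ (shiftGraph (2 ^ k)).chromaticNumber := by
  by_contra h
  push_neg at h
  set t := (shiftGraph (2 ^ k)).chromaticNumber.toNat with ht
  have hcol : (shiftGraph (2 ^ k)).Colorable t :=
    colorable_chromaticNumber_of_fintype _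
  have hbound := shiftGraph_colorable_bound hcol
  have hne : (shiftGraph (2 ^ k)).chromaticNumber ≠ ⊤ := h.ne_top
  have heq : (shiftGraph (2 ^ k)).chromaticNumber = (t : ℕ∞) := (ENat.coe_toNat hne).symm
  rw [heq, Nat.cast_lt] at h
  have h2 : 2 ^ k ≤ 2 ^ t := hbound
  have h3 := (Nat.pow_le_pow_iff_right (le_refl 2)).mp h2
  omega

/-- There is a constant `c > 0` and, for infinitely many `n`, a triangle-free graph on
`n` vertices with chromatic number at least `c * log (log n)`. -/
theorem exists_triangle_free_loglog_chromatic :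
    ∃ c : ℝ, 0 < c ∧ ∀ N : ℕ, ∃ n : ℕ, N ≤ n ∧
      ∃ G : SimpleGraph (Fin n),
        G.CliqueFree 3 ∧
        c * Real.log (Real.log n) ≤ (G.chromaticNumber.toNat : ℝ) := by
  refine ⟨1/2, by norm_num, fun N => ?_⟩
  set k := N + 2 with hk
  set m := 2 ^ k with hm
  set n := Fintype.card (ShiftV m) with hn
  let e : ShiftV m ≃ Fin n := Fintype.equivFin _
  refine ⟨n, ?_, (shiftGraph m).comap (e.symm : Fin n → ShiftV m), ?_, ?_⟩
  -- N ≤ n : inject Fin (m-1) into ShiftV m via j ↦ (j, j+1)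
  · have hfi : Function.Injective (fun j : Fin (m - 1) =>
        (⟨(⟨j.1, by omega⟩, ⟨j.1 + 1, by omega⟩), by simp [Fin.lt_def]⟩ : ShiftV m)) := by
      intro a b hab
      have h1 := congrArg (fun v : ShiftV m => v.1.1.1) hab
      exact Fin.ext h1
    have hle : m - 1 ≤ n := by
      have := Fintype.card_le_of_injective _ hfi
      rw [Fintype.card_fin] at this
      exact this
    have : N < 2 ^ N := Nat.lt_two_pow_self
    have : 2 ^ N ≤ 2 ^ k := Nat.pow_le_pow_right (by norm_num) (by omega)
    omega
  -- triangle-free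
  · exact (shiftGraph_triangleFree m).comap (Embedding.comap (e.symm.toEmbedding) _).isContained
  -- chromatic bound
  · set G : SimpleGraph (Fin n) := (shiftGraph m).comap (e.symm : Fin n → ShiftV m) with hG
    have iso : G ≃g shiftGraph m := Iso.comap e.symm (shiftGraph m)
    have hemb : shiftGraph m ↪g G := iso.symm.toEmbedding
    have hchi : (k : ℕ∞) ≤ G.chromaticNumber :=
      le_trans (shiftGraph_chromatic_ge k) (chromaticNumber_mono_of_hom hemb.toHom)
    have hne : G.chromaticNumber ≠ ⊤ := by
      have : G.chromaticNumber ≤ (n : ℕ∞) :=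
        (G.colorable_of_fintype.mono (by simp)).chromaticNumber_le
      exact (lt_of_le_of_lt this (by exact_mod_cast WithTop.coe_lt_top n)).ne
    have hk' : k ≤ G.chromaticNumber.toNat := by
      rw [← ENat.coe_toNat hne, Nat.cast_le] at hchi
      exact hchi
    -- n ≤ m ^ 2
    have hnm : n ≤ m ^ 2 := by
      have := Fintype.card_le_of_injective (Subtype.val : ShiftV m → Fin m × Fin m)
        Subtype.val_injective
      rw [Fintype.card_prod, Fintype.card_fin] at this
      rw [sq]
      exact this
    have hm4 : 4 ≤ m := by
      have : 2 ^ 2 ≤ 2 ^ k := Nat.pow_le_pow_right (by norm_num) (by omega)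
      omega
    have hn1 : (1 : ℕ) ≤ n := by
      refine Fintype.card_pos_iff.mpr ⟨⟨(⟨0, by omega⟩, ⟨1, by omega⟩), ?_⟩⟩
      simp [Fin.lt_def]
    -- real estimates
    have hlog1 : Real.log n ≤ 2 * k := by
      calc Real.log n ≤ Real.log (m ^ 2) := by
            apply Real.log_le_log (by exact_mod_cast hn1)
            exact_mod_cast hnm
        _ = Real.log ((2 : ℝ) ^ (2 * k)) := by
            congr 1
            rw [hm]
            push_cast
            rw [← pow_mul, Nat.mul_comm]
        _ = (2 * k : ℕ) * Real.log 2 := by rw [Real.log_pow]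
        _ ≤ 2 * k := by
            have hl1 : Real.log 2 ≤ 1 := by
              have := Real.log_le_sub_one_of_pos (by norm_num : (0:ℝ) < 2)
              linarith
            have hl0 : 0 ≤ Real.log 2 := Real.log_nonneg (by norm_num)
            have hk0 : (0:ℝ) ≤ (k:ℝ) := Nat.cast_nonneg k
            push_cast
            nlinarith
    have hlog2 : Real.log (Real.log n) ≤ 2 * k := by
      calc Real.log (Real.log n) ≤ Real.log n :=
            Real.log_le_self (Real.log_nonneg (by exact_mod_cast hn1))
        _ ≤ 2 * k := hlog1
    have : (k : ℝ) ≤ (G.chromaticNumber.toNat : ℝ) := by exact_mod_cast hk'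
    linarith
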